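/- Let S be an n×n Seidel matrix with spectrum {[λ]^a, [μ]^b, [ν]^1} where a, b ≥ 1 and λ, μ, ν are distinct. Then the ν-eigenspace of S contains a vector all of whose entries are ±1. -/

import Mathlib

open Polynomial

def IsSeidel {n : ℕ} (S : Matrix (Fin n) (Fin n) ℝ) : Prop :=
  S.IsSymm ∧ (∀ i, S i i = 0) ∧ ∀ i j, i ≠ j → S i j = 1 ∨ S i j = -1

open Matrix in
private lemma charpoly_conj_aux' {n : ℕ} (U V A : Matrix (Fin n) (Fin n) ℝ)
    (hUV : U * V = 1) : (U * A * V).charpoly = A.charpoly := by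
  have h1 : (C : ℝ →+* ℝ[X]).mapMatrix U * (C : ℝ →+* ℝ[X]).mapMatrix V = 1 := by
    rw [← _root_.map_mul, hUV, _root_.map_one]
  have hscal : (Matrix.scalar (Fin n) (X : ℝ[X]))
      = (X : ℝ[X]) • (1 : Matrix (Fin n) (Fin n) ℝ[X]) := by
    ext i j
    by_cases h : i = j <;>
      simp [h, Matrix.scalar_apply, Matrix.diagonal_apply, Matrix.one_apply]
  have key : charmatrix (U * A * V)
      = (C : ℝ →+* ℝ[X]).mapMatrix U * charmatrix A * (C : ℝ →+* ℝ[X]).mapMatrix V := by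
    rw [charmatrix, charmatrix, Matrix.mul_sub, Matrix.sub_mul, _root_.map_mul, _root_.map_mul]
    congr 1
    rw [hscal, mul_smul_comm, smul_mul_assoc, mul_one, h1]
  rw [Matrix.charpoly, Matrix.charpoly, key, det_mul, det_mul]
  have h2 : ((C : ℝ →+* ℝ[X]).mapMatrix U).det * ((C : ℝ →+* ℝ[X]).mapMatrix V).det = 1 := by
    rw [← det_mul, h1, det_one]
  calc ((C : ℝ →+* ℝ[X]).mapMatrix U).det * (charmatrix A).det
      * ((C : ℝ →+* ℝ[X]).mapMatrix V).det
      = ((C : ℝ →+* ℝ[X]).mapMatrix U).det * ((C : ℝ →+* ℝ[X]).mapMatrix V).det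
        * (charmatrix A).det := by ring
    _ = (charmatrix A).det := by rw [h2, one_mul]

theorem simple_eigenvalue_regular_eigenspace {n a b : ℕ} (ha : 1 ≤ a) (hb : 1 ≤ b)
    (S : Matrix (Fin n) (Fin n) ℝ) (hS : IsSeidel S) (lam mu nu : ℝ)
    (hlm : lam ≠ mu) (hln : lam ≠ nu) (hmn : mu ≠ nu)
    (hspec : S.charpoly = (X - C lam) ^ a * (X - C mu) ^ b * (X - C nu)) :
    ∃ x : Fin n → ℝ, (∀ i, x i = 1 ∨ x i = -1) ∧ S.mulVec x = nu • x := by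
  classical
  obtain ⟨hsym, hdiag, hoff⟩ := hS
  have hA : S.IsHermitian := by
    ext i j
    rw [Matrix.conjTranspose_apply, star_trivial]
    exact congrFun (congrFun hsym i) j
  set U : Matrix (Fin n) (Fin n) ℝ := ↑(hA.eigenvectorUnitary) with hUdef
  set W : Matrix (Fin n) (Fin n) ℝ := star U with hWdef
  have hUW : U * W = 1 := (Matrix.mem_unitaryGroup_iff).mp hA.eigenvectorUnitary.2
  have hWU : W * U = 1 := (Matrix.mem_unitaryGroup_iff').mp hA.eigenvectorUnitary.2
  set eig : Fin n → ℝ := hA.eigenvalues with heig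
  have hspecS : S = U * Matrix.diagonal eig * W := by
    have := hA.spectral_theorem
    rwa [show (RCLike.ofReal ∘ hA.eigenvalues : Fin n → ℝ) = eig by
      funext i; simp [RCLike.ofReal_real_eq_id, heig]] at this
  -- charpoly as product over eigenvalues
  have hcp : S.charpoly = ∏ i, (X - C (eig i)) := by
    rw [hspecS, charpoly_conj_aux' _ _ _ hUW,
      Matrix.charpoly_of_upperTriangular _ (Matrix.blockTriangular_diagonal eig)]
    simp
  -- roots multiset identity
  have hroots : Multiset.map eig Finset.univ.val = a • {lam} + b • {mu} + ({nu} : Multiset ℝ) := by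
    have h1 : (∏ i, (X - C (eig i))).roots = Multiset.map eig Finset.univ.val := by
      rw [show (∏ i, (X - C (eig i)))
          = ((Finset.univ.val.map eig).map (fun r => X - C r)).prod by
        rw [Multiset.map_map]; rfl]
      exact roots_multiset_prod_X_sub_C _
    have h2 : ((X - C lam) ^ a * (X - C mu) ^ b * (X - C nu)).roots
        = a • {lam} + b • {mu} + ({nu} : Multiset ℝ) := by
      rw [roots_mul, roots_mul, roots_pow, roots_pow, roots_X_sub_C, roots_X_sub_C, roots_X_sub_C]
      · exact mul_ne_zero (pow_ne_zero _ (X_sub_C_ne_zero lam))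
          (pow_ne_zero _ (X_sub_C_ne_zero mu))
      · exact mul_ne_zero
          (mul_ne_zero (pow_ne_zero _ (X_sub_C_ne_zero lam)) (pow_ne_zero _ (X_sub_C_ne_zero mu)))
          (X_sub_C_ne_zero nu)
    rw [← h1, ← hcp, hspec, h2]
  -- membership and the unique index with eigenvalue nu
  have hmem : ∀ i, eig i = lam ∨ eig i = mu ∨ eig i = nu := by
    intro i
    have hi : eig i ∈ Multiset.map eig Finset.univ.val :=
      Multiset.mem_map_of_mem _ (Finset.mem_univ i)
    rw [hroots] at hi
    simp only [Multiset.mem_add, Multiset.mem_nsmul, Multiset.mem_singleton] at hi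
    tauto
  have hcount : (Multiset.map eig Finset.univ.val).count nu = 1 := by
    rw [hroots]
    simp [Multiset.count_nsmul, Multiset.count_singleton, hln.symm, hmn.symm]
  rw [Multiset.count_map] at hcount
  have hfil : (Finset.univ.filter (fun i => nu = eig i)).card = 1 := by
    simpa [Finset.card, Finset.filter] using hcount
  obtain ⟨i₀, hi₀⟩ := Finset.card_eq_one.mp hfil
  have hi₀eq : eig i₀ = nu := by
    have : i₀ ∈ Finset.univ.filter (fun i => nu = eig i) := by
      rw [hi₀]; exact Finset.mem_singleton_self _
    rw [Finset.mem_filter] at this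
    exact this.2.symm
  have huniq : ∀ j, eig j = nu → j = i₀ := by
    intro j hj
    have : j ∈ Finset.univ.filter (fun i => nu = eig i) := by simp [hj]
    rw [hi₀] at this
    simpa using this
  -- the quadratic polynomial in S
  set d : Fin n → ℝ := fun k => (eig k - lam) * (eig k - mu) with hd
  have hdk : ∀ k, k ≠ i₀ → d k = 0 := by
    intro k hk
    rcases hmem k with h | h | h
    · simp [hd, h]
    · simp [hd, h]
    · exact absurd (huniq k h) hk
  have hdi₀ : d i₀ = (nu - lam) * (nu - mu) := by simp only [hd]; rw [hi₀eq]
  have hc0 : d i₀ ≠ 0 := by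
    rw [hdi₀]
    exact mul_ne_zero (sub_ne_zero.mpr (Ne.symm hln)) (sub_ne_zero.mpr (Ne.symm hmn))
  have hM : U * Matrix.diagonal d * W
      = S * S - (lam + mu) • S + (lam * mu) • 1 := by
    rw [hspecS]
    have h1 : (U * Matrix.diagonal eig * W) * (U * Matrix.diagonal eig * W)
        = U * (Matrix.diagonal eig * Matrix.diagonal eig) * W := by
      calc (U * Matrix.diagonal eig * W) * (U * Matrix.diagonal eig * W)
          = U * Matrix.diagonal eig * ((W * U) * (Matrix.diagonal eig * W)) := by
            simp only [Matrix.mul_assoc]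
        _ = _ := by rw [hWU, one_mul, ← Matrix.mul_assoc, ← Matrix.mul_assoc]
    rw [h1]
    have h2 : (lam + mu) • (U * Matrix.diagonal eig * W)
        = U * ((lam + mu) • Matrix.diagonal eig) * W := by
      rw [Matrix.mul_smul, Matrix.smul_mul]
    have h3 : (lam * mu) • (1 : Matrix (Fin n) (Fin n) ℝ)
        = U * ((lam * mu) • (1 : Matrix (Fin n) (Fin n) ℝ)) * W := by
      rw [Matrix.mul_smul, Matrix.smul_mul, mul_one, hUW]
    rw [h2, h3, ← Matrix.sub_mul, ← Matrix.mul_sub, ← Matrix.add_mul, ← Matrix.mul_add]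
    congr 2
    rw [Matrix.diagonal_mul_diagonal]
    ext i j
    by_cases hij : i = j
    · subst hij
      simp only [Matrix.diagonal_apply_eq, Matrix.sub_apply, Matrix.add_apply,
        Matrix.smul_apply, Matrix.one_apply_eq, smul_eq_mul, hd]
      ring
    · simp [Matrix.diagonal_apply_ne _ hij, Matrix.one_apply_ne hij]
  set v : Fin n → ℝ := ⇑(hA.eigenvectorBasis i₀) with hv
  have hentry : ∀ i j, (U * Matrix.diagonal d * W) i j = d i₀ * (v i * v j) := by
    intro i j
    rw [Matrix.mul_apply]
    rw [Finset.sum_eq_single i₀]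
    · rw [Matrix.mul_diagonal]
      have hWk : W i₀ j = U j i₀ := by rw [hWdef, Matrix.star_apply, star_trivial]
      rw [hWk]
      have hU1 : U i i₀ = v i := rfl
      have hU2 : U j i₀ = v j := rfl
      rw [hU1, hU2]; ring
    · intro k _ hki
      rw [Matrix.mul_diagonal, hdk k hki, mul_zero, zero_mul]
    · intro h; exact absurd (Finset.mem_univ i₀) h
  have hSS : ∀ i, (S * S) i i = (n : ℝ) - 1 := by
    intro i
    rw [Matrix.mul_apply]
    have h1 : ∀ j : Fin n, S i j * S j i = if j = i then 0 else 1 := by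
      intro j
      by_cases hj : j = i
      · subst hj; simp [hdiag j]
      · have hsymm : S j i = S i j := (hsym.apply j i).symm
        rw [if_neg hj, hsymm]
        rcases hoff i j (fun h => hj h.symm) with h | h <;> rw [h] <;> norm_num
    rw [Finset.sum_congr rfl (fun j _ => h1 j)]
    have h2 : ∀ j : Fin n, (if j = i then (0:ℝ) else 1) = 1 - (if j = i then 1 else 0) := by
      intro j; by_cases hj : j = i <;> simp [hj]
    rw [Finset.sum_congr rfl (fun j _ => h2 j), Finset.sum_sub_distrib]
    simp [Finset.sum_ite_eq]
  -- constancy of |v i|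
  have hconst : ∀ i, d i₀ * (v i * v i) = (n : ℝ) - 1 + lam * mu := by
    intro i
    have := congrFun (congrFun hM i) i
    rw [hentry i i] at this
    rw [this]
    simp only [Matrix.sub_apply, Matrix.add_apply, Matrix.smul_apply, Matrix.one_apply_eq,
      smul_eq_mul, hSS i, hdiag i]
    ring
  have hsq : ∀ i j, v i * v i = v j * v j := by
    intro i j
    have := (hconst i).trans (hconst j).symm
    exact mul_left_cancel₀ hc0 this
  -- find a nonzero coordinate
  have hvne : ∃ i, v i ≠ 0 := by
    by_contra h
    push_neg at h
    have : hA.eigenvectorBasis i₀ = 0 := by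
      ext i
      exact h i
    exact hA.eigenvectorBasis.orthonormal.ne_zero i₀ this
  obtain ⟨i₁, hi₁⟩ := hvne
  set t : ℝ := v i₁ with htdef
  refine ⟨fun i => v i / t, fun i => ?_, ?_⟩
  · rw [← mul_self_eq_one_iff]
    rw [div_mul_div_comm, hsq i i₁]
    exact div_self (mul_ne_zero hi₁ hi₁)
  · have hxv : (fun i => v i / t) = t⁻¹ • v := by
      funext i
      simp [div_eq_inv_mul, smul_eq_mul]
    rw [hxv, Matrix.mulVec_smul]
    have hev : S.mulVec v = nu • v := by
      have := hA.mulVec_eigenvectorBasis i₀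
      rwa [← heig, hi₀eq] at this
    rw [hev, smul_comm]
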